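/- Fix coprime integers 1 ≤ k < m, and let r₀ ∈ (0,1) be the unique positive root of 1 − x^k − x^m = 0. Then the fraction of the population with the shorter lifetime converges: lim_{n→∞} b_n / a_n = 1 − r₀^k = r₀^m. -/

import Mathlib

open Filter

/-- Error amplification sequence for the renewal argument. -/
noncomputable def errSeq (c : ℝ) : ℕ → ℝ
  | 0 => 0
  | (i+1) => (errSeq c i + 1) / c

lemma errSeq_nonneg {c : ℝ} (hc : 0 < c) : ∀ i, 0 ≤ errSeq c i
  | 0 => le_refl _
  | (i+1) => by
      have := errSeq_nonneg hc i
      have : (0:ℝ) ≤ errSeq c i + 1 := by linarith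
      exact div_nonneg this hc.le

lemma errSeq_mono {c : ℝ} (hc : 0 < c) (hc1 : c ≤ 1) : Monotone (errSeq c) := by
  apply monotone_nat_of_le_succ
  intro i
  have h0 := errSeq_nonneg hc i
  have h1 : errSeq c i + 1 ≤ (errSeq c i + 1) / c := by
    rw [le_div_iff₀ hc]
    nlinarith
  show errSeq c i ≤ (errSeq c i + 1) / c
  linarith

/-- Chicken–McNugget style representability with bounded coefficients. -/
lemma rep_lemma (k m : ℕ) (hk : 1 ≤ k) (hkm : k < m) (hcop : Nat.gcd k m = 1)
    (c : ℕ) (h1 : m * k ≤ c) (h2 : c < m * k + m) :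
    ∃ s t, s < m ∧ t ≤ k + 1 ∧ c = s * k + t * m := by
  have hm2 : 2 ≤ m := by omega
  haveI : NeZero m := ⟨by omega⟩
  let w : (ZMod m)ˣ := ZMod.unitOfCoprime k hcop
  let s : ℕ := (((w⁻¹ : (ZMod m)ˣ) : ZMod m) * (c : ZMod m)).val
  have hs : s < m := ZMod.val_lt _
  have hcast : ((s * k : ℕ) : ZMod m) = (c : ZMod m) := by
    push_cast
    rw [ZMod.natCast_val, ZMod.cast_id]
    have hwk : ((w : (ZMod m)ˣ) : ZMod m) = (k : ZMod m) := ZMod.coe_unitOfCoprime k hcop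
    rw [← hwk]
    rw [mul_comm ((w⁻¹ : (ZMod m)ˣ) : ZMod m) (c : ZMod m), mul_assoc]
    rw [← Units.val_mul, inv_mul_cancel]
    simp
  have hmod : s * k ≡ c [MOD m] := (ZMod.natCast_eq_natCast_iff _ _ _).mp hcast
  have hle : s * k ≤ c := by
    have h5 : s * k ≤ m * k := Nat.mul_le_mul_right k hs.le
    omega
  have hdvd : m ∣ c - s * k := (Nat.modEq_iff_dvd' hle).mp hmod
  refine ⟨s, (c - s * k) / m, hs, ?_, ?_⟩
  · have hlt : c - s * k < m * (k + 1) := by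
      have hmk : m * (k + 1) = m * k + m := by ring
      omega
    have h3 : (c - s * k) / m < k + 1 := by
      rw [Nat.div_lt_iff_lt_mul (show 0 < m by omega)]
      calc c - s * k < m * (k+1) := hlt
        _ = (k+1) * m := by ring
    omega
  · have := Nat.div_mul_cancel hdvd
    omega

theorem short_lifetime_fraction_limit (k m : ℕ) (hk : 1 ≤ k) (hkm : k < m)
    (hcop : Nat.gcd k m = 1) (a b : ℕ → ℝ)
    (ha0 : ∀ n < m, a n = 1)
    (harec : ∀ n ≥ m, a n = a (n - k) + a (n - m))
    (hb0 : ∀ n < m, b n = 0)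
    (hb1 : ∀ n, m ≤ n → n ≤ m + k - 1 → b n = 1)
    (hbrec : ∀ n ≥ m + k, b n = b (n - k) + b (n - m))
    (r₀ : ℝ) (hr0 : 0 < r₀) (hr1 : r₀ < 1) (hroot : r₀ ^ k + r₀ ^ m = 1) :
    Tendsto (fun n : ℕ => b n / a n) atTop (nhds (1 - r₀ ^ k)) ∧ 1 - r₀ ^ k = r₀ ^ m := by
  have hm : 0 < m := by omega
  constructor
  swap
  · linarith
  -- basic facts about p, q
  set p : ℝ := r₀ ^ k with hp_def
  set q : ℝ := r₀ ^ m with hq_def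
  have hp0 : 0 < p := pow_pos hr0 k
  have hq0 : 0 < q := pow_pos hr0 m
  have hp1 : p < 1 := pow_lt_one₀ hr0.le hr1 (by omega)
  have hq1 : q < 1 := pow_lt_one₀ hr0.le hr1 (by omega)
  set cmin : ℝ := min p q with hcmin_def
  have hcmin0 : 0 < cmin := lt_min hp0 hq0
  have hcmin1 : cmin ≤ 1 := le_trans (min_le_left _ _) hp1.le
  have hcp : cmin ≤ p := min_le_left _ _
  have hcq : cmin ≤ q := min_le_right _ _
  -- positivity of a
  have ha_pos : ∀ n, 0 < a n := by
    intro n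
    induction n using Nat.strong_induction_on with
    | _ n ih =>
      by_cases h : n < m
      · rw [ha0 n h]; norm_num
      · push_neg at h
        rw [harec n h]
        have h1 : n - k < n := by omega
        have h2 : n - m < n := by omega
        exact add_pos (ih _ h1) (ih _ h2)
  -- the normalized sequence u
  set u : ℕ → ℝ := fun n => a n * r₀ ^ n with hu_def
  have hu_pos : ∀ n, 0 < u n := fun n => mul_pos (ha_pos n) (pow_pos hr0 n)
  have hurec : ∀ n, m ≤ n → u n = p * u (n - k) + q * u (n - m) := by
    intro n hn
    have h1 : k ≤ n := by omega
    have e1 : r₀ ^ k * r₀ ^ (n - k) = r₀ ^ n := by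
      rw [← pow_add]; congr 1; omega
    have e2 : r₀ ^ m * r₀ ^ (n - m) = r₀ ^ n := by
      rw [← pow_add]; congr 1; omega
    simp only [hu_def]
    rw [harec n hn, add_mul, hp_def, hq_def]
    rw [show r₀ ^ k * (a (n-k) * r₀ ^ (n-k)) = a (n-k) * (r₀ ^ k * r₀ ^ (n-k)) by ring, e1]
    rw [show r₀ ^ m * (a (n-m) * r₀ ^ (n-m)) = a (n-m) * (r₀ ^ m * r₀ ^ (n-m)) by ring, e2]
  -- uniform lower bound on u
  have hu_lb : ∀ n, q ≤ u n := by
    intro n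
    induction n using Nat.strong_induction_on with
    | _ n ih =>
      by_cases h : n < m
      · simp only [hu_def]
        rw [ha0 n h, one_mul, hq_def]
        exact pow_le_pow_of_le_one hr0.le hr1.le (by omega)
      · push_neg at h
        rw [hurec n h]
        have h1 := ih (n - k) (by omega)
        have h2 := ih (n - m) (by omega)
        nlinarith [mul_le_mul_of_nonneg_left h1 hp0.le, mul_le_mul_of_nonneg_left h2 hq0.le]
  -- the window maximum M
  have hne : (Finset.range m).Nonempty := Finset.nonempty_range_iff.mpr hm.ne'
  set M : ℕ → ℝ := fun n => (Finset.range m).sup' hne (fun i => u (n + i)) with hM_def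
  have huM : ∀ n i, i < m → u (n + i) ≤ M n := by
    intro n i hi
    exact Finset.le_sup' (fun i => u (n + i)) (Finset.mem_range.mpr hi)
  have huM0 : ∀ n, u n ≤ M n := by
    intro n
    have := huM n 0 hm
    simpa using this
  have hManti : Antitone M := by
    apply antitone_nat_of_succ_le
    intro n
    apply Finset.sup'_le
    intro i hi
    rw [Finset.mem_range] at hi
    rcases Nat.lt_or_ge (i + 1) m with h | h
    · have := huM n (i + 1) h
      calc u (n + 1 + i) = u (n + (i+1)) := by ring_nf
        _ ≤ M n := this
    · -- i = m - 1, so n + 1 + i = n + m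
      have him : i = m - 1 := by omega
      have hidx : n + 1 + i = n + m := by omega
      rw [hidx]
      have hrec := hurec (n + m) (by omega)
      have e1 : n + m - k = n + (m - k) := by omega
      have e2 : n + m - m = n + 0 := by omega
      rw [hrec, e1, e2]
      have b1 : u (n + (m - k)) ≤ M n := huM n (m - k) (by omega)
      have b2 : u (n + 0) ≤ M n := huM n 0 hm
      have hsum : p * M n + q * M n = M n := by rw [← add_mul, hroot, one_mul]
      linarith [mul_le_mul_of_nonneg_left b1 hp0.le, mul_le_mul_of_nonneg_left b2 hq0.le]
  have hM_lb : ∀ n, q ≤ M n := fun n => le_trans (hu_lb n) (huM0 n)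
  have hBdd : BddBelow (Set.range M) := ⟨q, by rintro x ⟨n, rfl⟩; exact hM_lb n⟩
  set L : ℝ := ⨅ n, M n with hL_def
  have hMtend : Tendsto M atTop (nhds L) := tendsto_atTop_ciInf hManti hBdd
  have hLM : ∀ n, L ≤ M n := fun n => ciInf_le hBdd n
  have hL_pos : 0 < L := lt_of_lt_of_le hq0 (le_ciInf hM_lb)
  -- the key quantitative estimate
  set B : ℕ := m + k + 1 with hB_def
  have key : ∀ δ : ℝ, 0 < δ → ∃ N : ℕ, ∀ n, N ≤ n →
      L - δ * errSeq cmin B ≤ u n ∧ u n ≤ L + δ := by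
    intro δ hδ
    obtain ⟨N₀, hN₀⟩ := eventually_atTop.mp (hMtend.eventually_lt_const (by linarith : L < L + δ))
    -- one backward step
    have step : ∀ e : ℝ, 0 ≤ e → ∀ n, N₀ + m ≤ n → L - e ≤ u n →
        L - (e + δ)/cmin ≤ u (n - k) ∧ L - (e + δ)/cmin ≤ u (n - m) := by
      intro e he n hn hun
      have hnm : m ≤ n := by omega
      have hub_k : u (n - k) ≤ L + δ := by
        have h1 : u ((n-k) + 0) ≤ M (n - k) := huM (n-k) 0 hm
        have h2 : M (n - k) < L + δ := hN₀ (n - k) (by omega)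
        simp only [Nat.add_zero] at h1
        linarith
      have hub_m : u (n - m) ≤ L + δ := by
        have h1 : u ((n-m) + 0) ≤ M (n - m) := huM (n-m) 0 hm
        have h2 : M (n - m) < L + δ := hN₀ (n - m) (by omega)
        simp only [Nat.add_zero] at h1
        linarith
      have hrec := hurec n hnm
      have hkey : p * ((e + δ)/cmin) ≥ e + δ := by
        have h1 : 0 ≤ (e + δ)/cmin := div_nonneg (by linarith) hcmin0.le
        have h2 : cmin * ((e + δ)/cmin) = e + δ := mul_div_cancel₀ _ (ne_of_gt hcmin0)
        linarith [mul_le_mul_of_nonneg_right hcp h1]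
      have hkey' : q * ((e + δ)/cmin) ≥ e + δ := by
        have h1 : 0 ≤ (e + δ)/cmin := div_nonneg (by linarith) hcmin0.le
        have h2 : cmin * ((e + δ)/cmin) = e + δ := mul_div_cancel₀ _ (ne_of_gt hcmin0)
        linarith [mul_le_mul_of_nonneg_right hcq h1]
      constructor
      · -- p * u(n-k) = u n - q * u(n-m) ≥ L - e - q(L+δ) = pL - e - qδ
        have h3 : q * u (n - m) ≤ q * (L + δ) := mul_le_mul_of_nonneg_left hub_m hq0.le
        have h4 : p * u (n - k) ≥ p * L - e - q * δ := by
          have hsumL : p * L + q * L = L := by rw [← add_mul, hroot, one_mul]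
          linarith [hrec, hun, h3]
        have h5 : p * u (n - k) ≥ p * (L - (e + δ)/cmin) := by
          have hqd : q * δ ≤ 1 * δ := mul_le_mul_of_nonneg_right hq1.le hδ.le
          have hexp : p * (L - (e + δ)/cmin) = p * L - p * ((e + δ)/cmin) := by ring
          linarith [hkey]
        exact le_of_mul_le_mul_left h5 hp0
      · have h3 : p * u (n - k) ≤ p * (L + δ) := mul_le_mul_of_nonneg_left hub_k hp0.le
        have h4 : q * u (n - m) ≥ q * L - e - p * δ := by
          have hsumL : p * L + q * L = L := by rw [← add_mul, hroot, one_mul]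
          linarith [hrec, hun, h3]
        have h5 : q * u (n - m) ≥ q * (L - (e + δ)/cmin) := by
          have hpd : p * δ ≤ 1 * δ := mul_le_mul_of_nonneg_right hp1.le hδ.le
          have hexp : q * (L - (e + δ)/cmin) = q * L - q * ((e + δ)/cmin) := by ring
          linarith [hkey']
        exact le_of_mul_le_mul_left h5 hq0
    refine ⟨N₀ + m, ?_⟩
    intro n hn
    constructor
    swap
    · have := hN₀ n (by omega)
      have := huM0 n
      linarith
    -- lower bound via descent from the max of a later window
    obtain ⟨i, hi_mem, hji⟩ := Finset.exists_mem_eq_sup' hne (fun i => u (n + m * k + i))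
    rw [Finset.mem_range] at hi_mem
    have hjL : L ≤ u (n + m * k + i) := by
      have : L ≤ M (n + m * k) := hLM _
      rw [hM_def] at this
      simp only at this
      rw [hji] at this
      exact this
    set j : ℕ := n + m * k + i with hj_def
    -- descent
    have descend : ∀ I : ℕ, ∀ s t x : ℕ, s + t = I → N₀ + m ≤ x → x + s * k + t * m = j →
        L - δ * errSeq cmin I ≤ u x := by
      intro I
      induction I with
      | zero =>
        intro s t x hst hx hxj
        have hs0 : s = 0 := by omega
        have ht0 : t = 0 := by omega
        subst hs0; subst ht0
        simp only [errSeq, mul_zero]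
        have hxj' : x = j := by omega
        rw [hxj']
        linarith
      | succ I ih =>
        intro s t x hst hx hxj
        have hevalue : δ * errSeq cmin (I + 1) = (δ * errSeq cmin I + δ)/cmin := by
          show δ * ((errSeq cmin I + 1)/cmin) = _
          field_simp
        have he0 : 0 ≤ δ * errSeq cmin I := mul_nonneg hδ.le (errSeq_nonneg hcmin0 I)
        rcases Nat.eq_zero_or_pos s with hs | hs
        · -- t = t' + 1
          obtain ⟨t', rfl⟩ : ∃ t', t = t' + 1 := ⟨t - 1, by omega⟩
          subst hs
          have hIH : L - δ * errSeq cmin I ≤ u (x + m) := by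
            apply ih 0 t' (x + m) (by omega) (by omega)
            have : (x + m) + 0 * k + t' * m = x + 0 * k + (t' + 1) * m := by ring
            omega
          have hst := step (δ * errSeq cmin I) he0 (x + m) (by omega) hIH
          have : (x + m) - m = x := by omega
          rw [hevalue]
          rw [this] at hst
          exact hst.2
        · obtain ⟨s', rfl⟩ : ∃ s', s = s' + 1 := ⟨s - 1, by omega⟩
          have hIH : L - δ * errSeq cmin I ≤ u (x + k) := by
            apply ih s' t (x + k) (by omega) (by omega)
            have : (x + k) + s' * k + t * m = x + (s' + 1) * k + t * m := by ring
            omega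
          have hst := step (δ * errSeq cmin I) he0 (x + k) (by omega) hIH
          have : (x + k) - k = x := by omega
          rw [hevalue]
          rw [this] at hst
          exact hst.1
    obtain ⟨s, t, hs, ht, hc⟩ := rep_lemma k m hk hkm hcop (m * k + i) (by omega) (by omega)
    have hrep : n + s * k + t * m = j := by
      have : s * k + t * m = m * k + i := hc.symm
      omega
    have hdescend := descend (s + t) s t n rfl hn hrep
    have hmono : errSeq cmin (s + t) ≤ errSeq cmin B :=
      errSeq_mono hcmin0 hcmin1 (by omega)
    have := mul_le_mul_of_nonneg_left hmono hδ.le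
    linarith
  -- convergence of u to L
  have huL : Tendsto u atTop (nhds L) := by
    rw [Metric.tendsto_atTop]
    intro ε hε
    set E : ℝ := errSeq cmin B with hE_def
    have hE0 : 0 ≤ E := errSeq_nonneg hcmin0 B
    set δ : ℝ := ε / (2 * (E + 1)) with hδ_def
    have hδ0 : 0 < δ := div_pos hε (by linarith)
    obtain ⟨N, hN⟩ := key δ hδ0
    refine ⟨N, fun n hn => ?_⟩
    obtain ⟨h1, h2⟩ := hN n hn
    rw [Real.dist_eq, abs_sub_lt_iff]
    have hδE : δ * (2 * (E + 1)) = ε := div_mul_cancel₀ _ (by positivity)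
    constructor
    · nlinarith
    · nlinarith
  -- b n = a n - a (n - k)
  have hab : ∀ n, b n = a n - a (n - k) := by
    intro n
    induction n using Nat.strong_induction_on with
    | _ n ih =>
      rcases Nat.lt_or_ge n m with h | h
      · rw [hb0 n h]
        rcases Nat.lt_or_ge n k with h' | h'
        · have : n - k = 0 := by omega
          rw [this, ha0 n h, ha0 0 hm]
          ring
        · rw [ha0 n h, ha0 (n - k) (by omega)]
          ring
      · rcases Nat.lt_or_ge n (m + k) with h' | h'
        · rw [hb1 n h (by omega)]
          rw [harec n h]
          have : a (n - m) = 1 := ha0 (n - m) (by omega)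
          rw [this]
          ring
        · rw [hbrec n h', ih (n - k) (by omega), ih (n - m) (by omega)]
          rw [harec n (by omega), harec (n - k) (by omega)]
          have e1 : n - k - k = n - k - k := rfl
          have e2 : n - m - k = n - k - m := by omega
          rw [e2]
          ring
  -- final limit computation
  have hL_ne : L ≠ 0 := ne_of_gt hL_pos
  have huk : Tendsto (fun n => u (n - k)) atTop (nhds L) := huL.comp (tendsto_sub_atTop_nat k)
  have hratio : Tendsto (fun n => u (n - k) / u n) atTop (nhds 1) := by
    have := huk.div huL hL_ne
    rwa [div_self hL_ne] at this
  have hmain : Tendsto (fun n => 1 - p * (u (n - k) / u n)) atTop (nhds (1 - p)) := by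
    have h1 : Tendsto (fun n => p * (u (n - k) / u n)) atTop (nhds (p * 1)) :=
      (tendsto_const_nhds).mul hratio
    rw [mul_one] at h1
    exact (tendsto_const_nhds).sub h1
  apply hmain.congr'
  rw [EventuallyEq, eventually_atTop]
  refine ⟨k, fun n hn => ?_⟩
  have han : a n ≠ 0 := ne_of_gt (ha_pos n)
  have hank : a (n - k) ≠ 0 := ne_of_gt (ha_pos (n - k))
  have hrn : r₀ ^ n ≠ 0 := ne_of_gt (pow_pos hr0 n)
  have hrnk : r₀ ^ (n - k) ≠ 0 := ne_of_gt (pow_pos hr0 (n - k))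
  have hpow : r₀ ^ k * r₀ ^ (n - k) = r₀ ^ n := by
    rw [← pow_add]; congr 1; omega
  show 1 - p * (u (n - k) / u n) = b n / a n
  rw [hab n]
  simp only [hu_def, hp_def]
  field_simp
  linear_combination (-a (n - k)) * hpow
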